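/- Let 1 < τ < ∞, τ ≠ 2, and set σ = |τ-2|/(2τ). Define λ_0 = 0 and λ_{±k} = (-1)^k k^{-σ} for k ∈ ℕ. Then: (a) the restriction of λ to each dyadic block δ_k has ℓ_{2τ/|2-τ|, ∞} norm bounded by an absolute constant; but (b) sup_{n∈ℕ₀} Σ_{k=2^n}^{2^{n+1}-1} |λ_k - λ_{k-1}| = ∞. -/

import Mathlib

open MeasureTheory ENNReal

/-- Non-increasing rearrangement of a real sequence on `ℤ`, for `n ≥ 1`. -/
noncomputable def srearr (a : ℤ → ℝ) (n : ℕ) : ℝ≥0∞ :=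
  sInf {σ : ℝ≥0∞ | Measure.count {j : ℤ | σ < ENNReal.ofReal |a j|} < n}

/-- The dyadic block `δ_k = {-2^{k+1}+1,...,-2^k} ∪ {2^k,...,2^{k+1}-1}` for `k ≥ 1`,
and `δ₀ = {-1,0,1}`. -/
noncomputable def dyadicBlock (k : ℕ) : Finset ℤ :=
  if k = 0 then Finset.Icc (-1) 1
  else Finset.Icc (-(2 : ℤ) ^ (k + 1) + 1) (-(2 : ℤ) ^ k) ∪
    Finset.Icc ((2 : ℤ) ^ k) (2 ^ (k + 1) - 1)

lemma srearr_le_ofReal {a : ℤ → ℝ} {M : ℝ} (hM : ∀ j, |a j| ≤ M) {n : ℕ} (hn : 1 ≤ n) :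
    srearr a n ≤ ENNReal.ofReal M := by
  apply sInf_le
  have hempty : {j : ℤ | ENNReal.ofReal M < ENNReal.ofReal |a j|} = ∅ := by
    ext j
    simp only [Set.mem_setOf_eq, Set.mem_empty_iff_false, iff_false, not_lt]
    exact ENNReal.ofReal_le_ofReal (hM j)
  simp only [Set.mem_setOf_eq, hempty, measure_empty]
  exact_mod_cast Nat.pos_of_ne_zero (by omega)

lemma srearr_eq_zero {a : ℤ → ℝ} {s : Finset ℤ} (hs : ∀ j, a j ≠ 0 → j ∈ s) {n : ℕ}
    (hn : s.card < n) : srearr a n = 0 := by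
  refine le_antisymm (sInf_le ?_) zero_le
  have hsub : {j : ℤ | (0 : ℝ≥0∞) < ENNReal.ofReal |a j|} ⊆ (s : Set ℤ) := by
    intro j hj
    simp only [Set.mem_setOf_eq, ENNReal.ofReal_pos, abs_pos] at hj
    exact hs j hj
  calc Measure.count {j : ℤ | (0 : ℝ≥0∞) < ENNReal.ofReal |a j|}
      ≤ Measure.count (s : Set ℤ) := measure_mono hsub
    _ = s.card := Measure.count_apply_finset s
    _ < n := by exact_mod_cast hn

lemma dyadicBlock_card_le (k : ℕ) : (dyadicBlock k).card ≤ 2 ^ (k + 2) := by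
  unfold dyadicBlock
  by_cases hk : k = 0
  · subst hk; simp [Int.card_Icc]
  · rw [if_neg hk]
    refine (Finset.card_union_le _ _).trans ?_
    rw [Int.card_Icc, Int.card_Icc]
    have h1 : (-(2 : ℤ) ^ k + 1 - (-(2 : ℤ) ^ (k + 1) + 1)) = 2 ^ k := by
      rw [pow_succ]; ring
    have h2 : ((2 : ℤ) ^ (k + 1) - 1 + 1 - 2 ^ k) = 2 ^ k := by
      rw [pow_succ]; ring
    rw [h1, h2]
    have h3 : ((2 : ℤ) ^ k).toNat = 2 ^ k := by
      have : ((2 : ℤ) ^ k) = ((2 ^ k : ℕ) : ℤ) := by push_cast; ring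
      rw [this, Int.toNat_natCast]
    rw [h3]
    have : 2 ^ k + 2 ^ k = 2 ^ (k + 1) := by rw [pow_succ]; ring
    rw [this]
    exact Nat.pow_le_pow_right (by norm_num) (by omega)

lemma mem_dyadicBlock_natAbs {k : ℕ} {j : ℤ} (hj : j ∈ dyadicBlock k) :
    j = 0 ∨ 2 ^ k ≤ j.natAbs := by
  unfold dyadicBlock at hj
  by_cases hk : k = 0
  · subst hk
    simp only [if_pos rfl, Finset.mem_Icc] at hj
    simp only [pow_zero]
    omega
  · rw [if_neg hk, Finset.mem_union, Finset.mem_Icc, Finset.mem_Icc] at hj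
    right
    have h2k : (0 : ℤ) < 2 ^ k := by positivity
    have hcast : ((2 ^ k : ℕ) : ℤ) = (2 : ℤ) ^ k := by push_cast; ring
    have hcast2 : ((2 ^ (k+1) : ℕ) : ℤ) = (2 : ℤ) ^ (k+1) := by push_cast; ring
    rcases hj with ⟨h1, h2⟩ | ⟨h1, h2⟩ <;> omega

/-- for `1 < τ < ∞`, `τ ≠ 2`, `σ = |τ-2|/(2τ)`, and the sequence
`λ_0 = 0`, `λ_{±k} = (-1)^k k^{-σ}`: (a) the restriction of `λ` to each dyadic block
`δ_k` has `ℓ_{2τ/|2-τ|,∞}` norm bounded by a constant; (b) the Marcinkiewicz variation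
`sup_{n} Σ_{k=2^n}^{2^{n+1}-1} |λ_k - λ_{k-1}|` is infinite. -/
theorem example_hormander_not_marcinkiewicz (τ : ℝ) (hτ1 : 1 < τ) (hτ2 : τ ≠ 2)
    (σ : ℝ) (hσ : σ = |τ - 2| / (2 * τ)) (lam : ℤ → ℝ) (h0 : lam 0 = 0)
    (hval : ∀ k : ℕ, 1 ≤ k →
      lam k = (-1 : ℝ) ^ k * (k : ℝ) ^ (-σ) ∧
      lam (-(k : ℤ)) = (-1 : ℝ) ^ k * (k : ℝ) ^ (-σ)) :
    (∃ C : ℝ≥0∞, C ≠ ∞ ∧ ∀ k : ℕ,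
        (⨆ (n : ℕ) (_ : 1 ≤ n), (n : ℝ≥0∞) ^ (|2 - τ| / (2 * τ)) *
            srearr (fun m => if m ∈ dyadicBlock k then lam m else 0) n) ≤ C) ∧
      ¬ ∃ B : ℝ, ∀ n : ℕ,
          ∑ k ∈ Finset.Icc ((2 : ℤ) ^ n) (2 ^ (n + 1) - 1), |lam k - lam (k - 1)| ≤ B := by
  have hτ0 : (0 : ℝ) < τ := by linarith
  have habs : (0 : ℝ) < |τ - 2| := abs_pos.mpr (sub_ne_zero.mpr hτ2)
  have hσpos : 0 < σ := by rw [hσ]; positivity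
  have hσhalf : σ ≤ 1 / 2 := by
    rw [hσ, div_le_iff₀ (by linarith)]
    have h1 : |τ - 2| ≤ τ := abs_le.mpr ⟨by linarith, by linarith⟩
    linarith
  have hE : |2 - τ| / (2 * τ) = σ := by rw [hσ, abs_sub_comm]
  -- lam on naturals
  have lam_nat : ∀ p : ℕ, lam p = (-1 : ℝ) ^ p * (p : ℝ) ^ (-σ) := by
    intro p
    rcases Nat.eq_zero_or_pos p with hp | hp
    · subst hp
      simp [h0, Real.zero_rpow (neg_ne_zero.mpr hσpos.ne')]
    · exact (hval p hp).1
  -- |lam j| in terms of natAbs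
  have lam_abs : ∀ j : ℤ, |lam j| = (j.natAbs : ℝ) ^ (-σ) := by
    intro j
    have hone : |(-1 : ℝ) ^ j.natAbs| = 1 := by
      rw [abs_pow, abs_neg, abs_one, one_pow]
    rcases Int.natAbs_eq j with hj | hj
    · conv_lhs => rw [hj]
      rw [lam_nat j.natAbs, abs_mul, hone, one_mul,
        abs_of_nonneg (Real.rpow_nonneg (Nat.cast_nonneg _) _)]
    · rcases Nat.eq_zero_or_pos j.natAbs with h | h
      · have hj0 : j = 0 := by omega
        simp [hj0, h0, Real.zero_rpow (neg_ne_zero.mpr hσpos.ne')]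
      · conv_lhs => rw [hj]
        rw [(hval j.natAbs h).2, abs_mul, hone, one_mul,
          abs_of_nonneg (Real.rpow_nonneg (Nat.cast_nonneg _) _)]
  constructor
  · -- part (a)
    refine ⟨4, by norm_num, fun k => ?_⟩
    refine iSup₂_le fun n hn => ?_
    rw [hE]
    set a : ℤ → ℝ := fun m => if m ∈ dyadicBlock k then lam m else 0 with ha
    by_cases hcase : n ≤ 2 ^ (k + 2)
    · -- n small: use sup bound on values
      have hM : ∀ j, |a j| ≤ ((2 : ℝ) ^ k) ^ (-σ) := by
        intro j
        by_cases hj : j ∈ dyadicBlock k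
        · simp only [ha, if_pos hj]
          rw [lam_abs j]
          rcases mem_dyadicBlock_natAbs hj with h | h
          · subst h
            simp only [Int.natAbs_zero, Nat.cast_zero]
            rw [Real.zero_rpow (neg_ne_zero.mpr hσpos.ne')]
            positivity
          · apply Real.rpow_le_rpow_of_nonpos (by positivity)
              (by exact_mod_cast h) (by linarith)
        · simp only [ha, if_neg hj, abs_zero]
          positivity
      have h1 : srearr a n ≤ ENNReal.ofReal (((2 : ℝ) ^ k) ^ (-σ)) :=
        srearr_le_ofReal hM hn
      have h2 : (n : ℝ≥0∞) ^ σ ≤ ((2 : ℝ≥0∞) ^ (k + 2)) ^ σ := by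
        apply ENNReal.rpow_le_rpow _ hσpos.le
        calc (n : ℝ≥0∞) ≤ ((2 ^ (k + 2) : ℕ) : ℝ≥0∞) := by exact_mod_cast hcase
          _ = (2 : ℝ≥0∞) ^ (k + 2) := by push_cast; ring
      have h3 : ENNReal.ofReal (((2 : ℝ) ^ k) ^ (-σ)) = ((2 : ℝ≥0∞) ^ k) ^ (-σ) := by
        rw [← ENNReal.ofReal_rpow_of_pos (by positivity)]
        congr 1
        rw [ENNReal.ofReal_pow (by norm_num)]
        norm_num
      calc (n : ℝ≥0∞) ^ σ * srearr a n
          ≤ ((2 : ℝ≥0∞) ^ (k + 2)) ^ σ * ((2 : ℝ≥0∞) ^ k) ^ (-σ) := by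
            rw [← h3]; exact mul_le_mul' h2 h1
        _ = ((2 : ℝ≥0∞) ^ (((k : ℝ) + 2))) ^ σ * ((2 : ℝ≥0∞) ^ (k : ℝ)) ^ (-σ) := by
            rw [← ENNReal.rpow_natCast 2 (k + 2), ← ENNReal.rpow_natCast 2 k]
            norm_num
        _ = (2 : ℝ≥0∞) ^ (((k : ℝ) + 2) * σ) * (2 : ℝ≥0∞) ^ ((k : ℝ) * (-σ)) := by
            rw [← ENNReal.rpow_mul, ← ENNReal.rpow_mul]
        _ = (2 : ℝ≥0∞) ^ (((k : ℝ) + 2) * σ + (k : ℝ) * (-σ)) := by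
            rw [ENNReal.rpow_add _ _ (by norm_num) (by norm_num)]
        _ = (2 : ℝ≥0∞) ^ (2 * σ) := by ring_nf
        _ ≤ (2 : ℝ≥0∞) ^ (1 : ℝ) := by
            apply ENNReal.rpow_le_rpow_of_exponent_le (by norm_num)
            linarith
        _ ≤ 4 := by rw [ENNReal.rpow_one]; norm_num
    · -- n large: srearr is zero
      have hz : srearr a n = 0 := by
        apply srearr_eq_zero (s := dyadicBlock k)
        · intro j hj
          by_contra hmem
          exact hj (by simp [ha, if_neg hmem])
        · exact lt_of_le_of_lt (dyadicBlock_card_le k) (by omega)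
      rw [hz, mul_zero]
      exact zero_le
  · -- part (b)
    rintro ⟨B, hB⟩
    obtain ⟨m, hm⟩ := pow_unbounded_of_one_lt (2 * B) (one_lt_two (α := ℝ))
    set n : ℕ := 2 * m with hn
    -- lower bound each term of the sum
    have hterm : ∀ j ∈ Finset.Icc ((2 : ℤ) ^ n) (2 ^ (n + 1) - 1),
        ((2 : ℝ) ^ (n + 1)) ^ (-(1 / 2) : ℝ) ≤ |lam j - lam (j - 1)| := by
      intro j hj
      rw [Finset.mem_Icc] at hj
      have h2n : (1 : ℤ) ≤ 2 ^ n := one_le_pow₀ (by norm_num)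
      have hj1 : (1 : ℤ) ≤ j := le_trans h2n hj.1
      set p : ℕ := j.toNat with hp
      have hpj : (p : ℤ) = j := Int.toNat_of_nonneg (by omega)
      have hp1 : 1 ≤ p := by omega
      have hjm1 : j - 1 = ((p - 1 : ℕ) : ℤ) := by omega
      have hlj : lam j = (-1 : ℝ) ^ p * (p : ℝ) ^ (-σ) := by
        rw [← hpj]; exact lam_nat p
      have hljm : lam (j - 1) = (-1 : ℝ) ^ (p - 1) * ((p - 1 : ℕ) : ℝ) ^ (-σ) := by
        rw [hjm1]; exact lam_nat (p - 1)
      have hsign : (-1 : ℝ) ^ (p - 1) = -((-1 : ℝ) ^ p) := by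
        have h := pow_succ (-1 : ℝ) (p - 1)
        rw [Nat.sub_add_cancel hp1] at h
        rw [h]; ring
      have hA : (0 : ℝ) ≤ (p : ℝ) ^ (-σ) := Real.rpow_nonneg (Nat.cast_nonneg _) _
      have hBnn : (0 : ℝ) ≤ ((p - 1 : ℕ) : ℝ) ^ (-σ) := Real.rpow_nonneg (Nat.cast_nonneg _) _
      have habs2 : |lam j - lam (j - 1)| = (p : ℝ) ^ (-σ) + ((p - 1 : ℕ) : ℝ) ^ (-σ) := by
        rw [hlj, hljm, hsign]
        have : (-1 : ℝ) ^ p * (p : ℝ) ^ (-σ) - -(-1 : ℝ) ^ p * ((p - 1 : ℕ) : ℝ) ^ (-σ)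
            = (-1 : ℝ) ^ p * ((p : ℝ) ^ (-σ) + ((p - 1 : ℕ) : ℝ) ^ (-σ)) := by ring
        rw [this, abs_mul, abs_pow, abs_neg, abs_one, one_pow, one_mul,
          abs_of_nonneg (by linarith)]
      rw [habs2]
      have hple : (p : ℝ) ≤ (2 : ℝ) ^ (n + 1) := by
        have : (p : ℤ) ≤ 2 ^ (n + 1) := by omega
        exact_mod_cast this
      have hstep1 : ((2 : ℝ) ^ (n + 1)) ^ (-σ) ≤ (p : ℝ) ^ (-σ) :=
        Real.rpow_le_rpow_of_nonpos (by exact_mod_cast hp1) hple (by linarith)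
      have hstep2 : ((2 : ℝ) ^ (n + 1)) ^ (-(1 / 2) : ℝ) ≤ ((2 : ℝ) ^ (n + 1)) ^ (-σ) :=
        Real.rpow_le_rpow_of_exponent_le (one_le_pow₀ (by norm_num)) (by linarith)
      linarith
    -- sum lower bound
    have hcard : (Finset.Icc ((2 : ℤ) ^ n) (2 ^ (n + 1) - 1)).card = 2 ^ n := by
      rw [Int.card_Icc]
      have h1 : (2 : ℤ) ^ (n + 1) - 1 + 1 - 2 ^ n = 2 ^ n := by rw [pow_succ]; ring
      rw [h1]
      have : ((2 : ℤ) ^ n) = ((2 ^ n : ℕ) : ℤ) := by push_cast; ring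
      rw [this, Int.toNat_natCast]
    have hsum : (2 ^ n : ℝ) * ((2 : ℝ) ^ (n + 1)) ^ (-(1 / 2) : ℝ)
        ≤ ∑ k ∈ Finset.Icc ((2 : ℤ) ^ n) (2 ^ (n + 1) - 1), |lam k - lam (k - 1)| := by
      have := Finset.card_nsmul_le_sum (Finset.Icc ((2 : ℤ) ^ n) (2 ^ (n + 1) - 1))
        (fun k => |lam k - lam (k - 1)|) (((2 : ℝ) ^ (n + 1)) ^ (-(1 / 2) : ℝ)) hterm
      rwa [hcard, nsmul_eq_mul, Nat.cast_pow, Nat.cast_ofNat] at this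
    -- evaluate the lower bound
    have hexp : ((2 : ℝ) ^ (n + 1)) ^ (-(1 / 2) : ℝ) ≥ ((2 : ℝ) ^ (m + 1))⁻¹ := by
      have h1 : ((2 : ℝ) ^ (m + 1)) ^ (-(1 / 2) * (2 : ℝ)) = ((2 : ℝ) ^ (m + 1))⁻¹ := by
        norm_num [Real.rpow_neg_one]
      have h2 : ((2 : ℝ) ^ (m + 1)) ^ (-(1 / 2) * (2 : ℝ))
          = (((2 : ℝ) ^ (m + 1)) ^ (2 : ℝ)) ^ (-(1 / 2) : ℝ) := by
        rw [mul_comm, Real.rpow_mul (by positivity)]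
      have h3 : (((2 : ℝ) ^ (m + 1)) ^ (2 : ℝ)) = (2 : ℝ) ^ (2 * (m + 1)) := by
        rw [Real.rpow_two, ← pow_mul]
        ring_nf
      have h4 : (2 : ℝ) ^ (n + 1) ≤ (2 : ℝ) ^ (2 * (m + 1)) :=
        pow_le_pow_right₀ (by norm_num) (by omega)
      calc ((2 : ℝ) ^ (m + 1))⁻¹ = ((2 : ℝ) ^ (2 * (m + 1))) ^ (-(1 / 2) : ℝ) := by
            rw [← h3, ← h2, h1]
        _ ≤ ((2 : ℝ) ^ (n + 1)) ^ (-(1 / 2) : ℝ) :=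
            Real.rpow_le_rpow_of_nonpos (by positivity) h4 (by norm_num)
    have hfinal : B < (2 ^ n : ℝ) * ((2 : ℝ) ^ (n + 1)) ^ (-(1 / 2) : ℝ) := by
      have h5 : (2 ^ n : ℝ) * ((2 : ℝ) ^ (m + 1))⁻¹ = (2 : ℝ) ^ m / 2 := by
        rw [hn, two_mul, pow_add, pow_succ]
        field_simp
      have h6 : B < (2 ^ n : ℝ) * ((2 : ℝ) ^ (m + 1))⁻¹ := by
        rw [h5]; linarith
      have h7 : (2 ^ n : ℝ) * ((2 : ℝ) ^ (m + 1))⁻¹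
          ≤ (2 ^ n : ℝ) * ((2 : ℝ) ^ (n + 1)) ^ (-(1 / 2) : ℝ) := by
        apply mul_le_mul_of_nonneg_left hexp (by positivity)
      linarith
    exact absurd (hB n) (not_le.mpr (lt_of_lt_of_le hfinal hsum))
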